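/- Let d ≥ 1 and n₁,…,n_d ≥ 1, and for i = 1,…,d set aᵢ = ∏_{j<i} n_j, bᵢ = ∏_{j>i} n_j and Dᵢ = I_{bᵢ} ⊗ D_{nᵢ} ⊗ I_{aᵢ}, where ⊗ is the Kronecker product of matrices and I_m the m×m identity. Then the spectral norm of the d-dimensional discrete Laplacian ∇*∇ = Σ_{i=1}^d Dᵢᵀ Dᵢ, an n×n matrix with n = n₁⋯n_d, is strictly smaller than 4d. -/

import Mathlib

open Finset Matrix Kronecker

noncomputable section

/-- One-dimensional forward-difference matrix with mirror boundary conditions: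
`(D_m)_{j,j} = −1`, `(D_m)_{j,j+1} = 1` for `j = 1,…,m−1`, last row zero. -/
def Dmat (m : ℕ) : Matrix (Fin m) (Fin m) ℝ :=
  Matrix.of fun i j =>
    if (i : ℕ) + 1 < m then
      (if j = i then (-1 : ℝ) else if (j : ℕ) = (i : ℕ) + 1 then 1 else 0)
    else 0

lemma nat_identity (k : ℕ) (w : ℕ → ℝ) :
    ∑ j ∈ range k, (w (j+1) - w j)^2 + (∑ j ∈ range k, (w (j+1) + w j)^2
      + (2*(w 0)^2 + 2*(w k)^2)) = 4 * ∑ j ∈ range (k+1), (w j)^2 := by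
  have h1 : ∑ j ∈ range (k+1), (w j)^2 = (∑ j ∈ range k, (w (j+1))^2) + (w 0)^2 :=
    Finset.sum_range_succ' _ k
  have h2 : ∑ j ∈ range (k+1), (w j)^2 = (∑ j ∈ range k, (w j)^2) + (w k)^2 :=
    Finset.sum_range_succ _ k
  have h3 : ∑ j ∈ range k, ((w (j+1) - w j)^2 + (w (j+1) + w j)^2)
      = ∑ j ∈ range k, (2*(w (j+1))^2 + 2*(w j)^2) := by
    apply Finset.sum_congr rfl; intro j _; ring
  rw [Finset.sum_add_distrib, Finset.sum_add_distrib] at h3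
  have h4 : ∑ j ∈ range k, 2 * (w (j+1))^2 = 2 * ∑ j ∈ range k, (w (j+1))^2 :=
    (Finset.mul_sum _ _ _).symm
  have h5 : ∑ j ∈ range k, 2 * (w j)^2 = 2 * ∑ j ∈ range k, (w j)^2 :=
    (Finset.mul_sum _ _ _).symm
  linarith [h1, h2, h3, h4, h5]

lemma nat_strict (k : ℕ) (w : ℕ → ℝ) (hw : ∃ j < k + 1, w j ≠ 0) :
    ∑ j ∈ range k, (w (j+1) - w j)^2 < 4 * ∑ j ∈ range (k+1), (w j)^2 := by
  classical
  have hid := nat_identity k w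
  have hS : (0:ℝ) ≤ ∑ j ∈ range k, (w (j+1) + w j)^2 :=
    Finset.sum_nonneg fun _ _ => sq_nonneg _
  have hex : ∃ j, w j ≠ 0 := ⟨hw.choose, hw.choose_spec.2⟩
  set j0 := Nat.find hex with hj0def
  have hj0 : w j0 ≠ 0 := Nat.find_spec hex
  have hj0lt : j0 < k + 1 := lt_of_le_of_lt (Nat.find_min' hex hw.choose_spec.2) hw.choose_spec.1
  have key : 0 < ∑ j ∈ range k, (w (j+1) + w j)^2 + (2*(w 0)^2 + 2*(w k)^2) := by
    rcases Nat.eq_zero_or_pos j0 with h0 | hpos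
    · have : 0 < 2*(w 0)^2 := by
        have := hj0; rw [h0] at this
        positivity
      nlinarith [sq_nonneg (w k)]
    · obtain ⟨t, ht⟩ := Nat.exists_eq_succ_of_ne_zero hpos.ne'
      have hwt : w t = 0 := by
        by_contra h
        exact absurd h (Nat.find_min hex (by omega))
      have htk : t ∈ range k := Finset.mem_range.mpr (by omega)
      have hterm : 0 < (w (t+1) + w t)^2 := by
        rw [hwt, add_zero]
        have : w (t+1) ≠ 0 := by have := hj0; rwa [ht] at this
        positivity
      have hle : (w (t+1) + w t)^2 ≤ ∑ j ∈ range k, (w (j+1) + w j)^2 :=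
        Finset.single_le_sum (f := fun j => (w (j+1) + w j)^2) (fun _ _ => sq_nonneg _) htk
      nlinarith [sq_nonneg (w 0), sq_nonneg (w k)]
  linarith

lemma nat_le (k : ℕ) (w : ℕ → ℝ) :
    ∑ j ∈ range k, (w (j+1) - w j)^2 ≤ 4 * ∑ j ∈ range (k+1), (w j)^2 := by
  have hid := nat_identity k w
  have hS : (0:ℝ) ≤ ∑ j ∈ range k, (w (j+1) + w j)^2 :=
    Finset.sum_nonneg fun _ _ => sq_nonneg _
  nlinarith [sq_nonneg (w 0), sq_nonneg (w k)]

lemma Dmat_mulVec (m : ℕ) (v : Fin m → ℝ) (i : Fin m) :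
    (Dmat m *ᵥ v) i = if h : (i:ℕ) + 1 < m then v ⟨(i:ℕ)+1, h⟩ - v i else 0 := by
  classical
  simp only [Matrix.mulVec, dotProduct, Dmat, Matrix.of_apply]
  by_cases h : (i:ℕ) + 1 < m
  · rw [dif_pos h]
    set i' : Fin m := ⟨(i:ℕ)+1, h⟩ with hi'
    have hne : i' ≠ i := by
      simp [hi', Fin.ext_iff]
    have hfun : ∀ j : Fin m,
        (if (i:ℕ) + 1 < m then (if j = i then (-1:ℝ) else if (j:ℕ) = (i:ℕ) + 1 then 1 else 0) else 0) * v j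
          = (if j = i then -v j else 0) + (if j = i' then v j else 0) := by
      intro j
      rw [if_pos h]
      have hji' : ((j:ℕ) = (i:ℕ) + 1) ↔ j = i' := by
        simp [hi', Fin.ext_iff]
      simp only [hji']
      rcases eq_or_ne j i with h1 | h1 <;> rcases eq_or_ne j i' with h2 | h2 <;>
        simp_all <;> ring
    rw [Finset.sum_congr rfl (fun j _ => hfun j), Finset.sum_add_distrib]
    rw [Finset.sum_ite_eq' Finset.univ i (fun j => -v j),
        Finset.sum_ite_eq' Finset.univ i' (fun j => v j)]
    simp [sub_eq_add_neg, add_comm]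
  · rw [dif_neg h]
    simp [if_neg h]

lemma dmat_dot_le (m : ℕ) (v : Fin m → ℝ) :
    (Dmat m *ᵥ v) ⬝ᵥ (Dmat m *ᵥ v) ≤ 4 * (v ⬝ᵥ v) ∧
    (v ≠ 0 → (Dmat m *ᵥ v) ⬝ᵥ (Dmat m *ᵥ v) < 4 * (v ⬝ᵥ v)) := by
  classical
  rcases m with _ | k
  · constructor
    · simp [dotProduct]
    · intro hv; exact absurd (funext fun i => i.elim0) hv
  · set w : ℕ → ℝ := fun j => if h : j < k+1 then v ⟨j,h⟩ else 0 with hw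
    have hB : v ⬝ᵥ v = ∑ j ∈ range (k+1), (w j)^2 := by
      rw [← Fin.sum_univ_eq_sum_range (fun j => (w j)^2) (k+1)]
      apply Finset.sum_congr rfl
      intro i _
      rw [hw]
      simp only [Fin.is_lt, dif_pos, Fin.eta]
      ring
    have hA : (Dmat (k+1) *ᵥ v) ⬝ᵥ (Dmat (k+1) *ᵥ v)
        = ∑ j ∈ range k, (w (j+1) - w j)^2 := by
      have e1 : (Dmat (k+1) *ᵥ v) ⬝ᵥ (Dmat (k+1) *ᵥ v)
          = ∑ j ∈ range (k+1), (if j + 1 < k+1 then (w (j+1) - w j)^2 else 0) := by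
        rw [dotProduct,
          ← Fin.sum_univ_eq_sum_range (fun j => (if j + 1 < k+1 then (w (j+1) - w j)^2 else 0)) (k+1)]
        apply Finset.sum_congr rfl
        intro i _
        rw [Dmat_mulVec]
        by_cases h : (i:ℕ) + 1 < k + 1
        · rw [dif_pos h, if_pos h, hw]
          simp only [dif_pos h, Fin.is_lt, dif_pos, Fin.eta]
          ring
        · rw [dif_neg h, if_neg h]; ring
      rw [e1, Finset.sum_range_succ, if_neg (lt_irrefl _)]
      rw [add_zero]
      apply Finset.sum_congr rfl
      intro j hj
      have hjk := Finset.mem_range.mp hj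
      rw [if_pos (by omega : j + 1 < k + 1)]
    constructor
    · rw [hA, hB]; exact nat_le k w
    · intro hv
      rw [hA, hB]
      apply nat_strict
      obtain ⟨i, hi⟩ := Function.ne_iff.mp hv
      refine ⟨(i:ℕ), i.isLt, ?_⟩
      rw [hw]
      have := i.isLt
      simpa [Fin.is_lt] using And.intro (by omega : (i:ℕ) ≤ k) hi

lemma kron_dot (bn nn an : ℕ) (y : (Fin bn × Fin nn) × Fin an → ℝ)
    (M : Matrix ((Fin bn × Fin nn) × Fin an) ((Fin bn × Fin nn) × Fin an) ℝ)
    (hM : M = ((1 : Matrix (Fin bn) (Fin bn) ℝ) ⊗ₖ Dmat nn) ⊗ₖ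
      (1 : Matrix (Fin an) (Fin an) ℝ)) :
    (M *ᵥ y) ⬝ᵥ (M *ᵥ y) ≤ 4 * (y ⬝ᵥ y) ∧
      (y ≠ 0 → (M *ᵥ y) ⬝ᵥ (M *ᵥ y) < 4 * (y ⬝ᵥ y)) := by
  classical
  set s : Fin bn × Fin an → (Fin nn → ℝ) := fun p μ => y ((p.1, μ), p.2) with hs
  have hMv : ∀ (β : Fin bn) (μ : Fin nn) (α : Fin an),
      (M *ᵥ y) ((β,μ),α) = (Dmat nn *ᵥ s (β, α)) μ := by
    intro β μ α
    rw [hM]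
    simp only [Matrix.mulVec, dotProduct, Fintype.sum_prod_type,
      Matrix.kroneckerMap_apply, Matrix.one_apply, hs]
    simp [mul_ite, ite_mul, zero_mul, mul_zero, Finset.sum_ite_eq, Finset.sum_ite_eq']
  have hdot : ∀ u v : (Fin bn × Fin nn) × Fin an → ℝ,
      u ⬝ᵥ v = ∑ p : Fin bn × Fin an, ∑ μ : Fin nn, u ((p.1, μ), p.2) * v ((p.1, μ), p.2) := by
    intro u v
    rw [dotProduct, Fintype.sum_prod_type, Fintype.sum_prod_type]
    rw [Fintype.sum_prod_type]
    apply Finset.sum_congr rfl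
    intro β _
    rw [Finset.sum_comm]
  have hA : (M *ᵥ y) ⬝ᵥ (M *ᵥ y)
      = ∑ p : Fin bn × Fin an, (Dmat nn *ᵥ s p) ⬝ᵥ (Dmat nn *ᵥ s p) := by
    rw [hdot]
    apply Finset.sum_congr rfl
    intro p _
    rw [dotProduct]
    exact Finset.sum_congr rfl fun μ _ => by rw [hMv p.1 μ p.2]
  have hB : 4 * (y ⬝ᵥ y) = ∑ p : Fin bn × Fin an, 4 * (s p ⬝ᵥ s p) := by
    rw [hdot, Finset.mul_sum]
    exact Finset.sum_congr rfl fun p _ => by rw [dotProduct, hs]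
  constructor
  · rw [hA, hB]
    exact Finset.sum_le_sum fun p _ => (dmat_dot_le nn (s p)).1
  · intro hy
    rw [hA, hB]
    obtain ⟨q, hq⟩ := Function.ne_iff.mp hy
    apply Finset.sum_lt_sum (fun p _ => (dmat_dot_le nn (s p)).1)
    refine ⟨(q.1.1, q.2), Finset.mem_univ _, ?_⟩
    apply (dmat_dot_le nn _).2
    intro h0
    apply hq
    have := congrFun h0 q.1.2
    simpa [hs] using this

lemma dot_comp_equiv {ι κ : Type*} [Fintype ι] [Fintype κ] (e : ι ≃ κ) (u v : κ → ℝ) :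
    (u ∘ e) ⬝ᵥ (v ∘ e) = u ⬝ᵥ v :=
  Fintype.sum_equiv e _ _ (fun _ => rfl)

lemma sum_mulVec' {ι m' n' : Type*} [Fintype n'] (s : Finset ι)
    (M : ι → Matrix m' n' ℝ) (v : n' → ℝ) :
    (∑ i ∈ s, M i) *ᵥ v = ∑ i ∈ s, (M i *ᵥ v) := by
  funext j
  simp only [Matrix.mulVec, dotProduct, Matrix.sum_apply, Finset.sum_apply,
    Finset.sum_mul]
  exact Finset.sum_comm

lemma sum_dot' {ι n' : Type*} [Fintype n'] (s : Finset ι) (u : ι → n' → ℝ) (v : n' → ℝ) :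
    (∑ i ∈ s, u i) ⬝ᵥ v = ∑ i ∈ s, (u i ⬝ᵥ v) := by
  simp only [dotProduct, Finset.sum_apply, Finset.sum_mul]
  exact Finset.sum_comm

lemma dotCS {κ : Type*} [Fintype κ] (u v : κ → ℝ) :
    u ⬝ᵥ v ≤ Real.sqrt (u ⬝ᵥ u) * Real.sqrt (v ⬝ᵥ v) := by
  have h := Real.sum_mul_le_sqrt_mul_sqrt Finset.univ u v
  have hu : u ⬝ᵥ u = ∑ j, u j ^ 2 := Finset.sum_congr rfl fun j _ => (sq (u j)).symm
  have hv : v ⬝ᵥ v = ∑ j, v j ^ 2 := Finset.sum_congr rfl fun j _ => (sq (v j)).symm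
  rw [hu, hv]
  exact h

open RealInnerProductSpace

/-- The spectral norm of the `d`-dimensional discrete Laplacian
`∇*∇ = Σ_{i=1}^d Dᵢᵀ Dᵢ`, with `Dᵢ = I_{bᵢ} ⊗ D_{nᵢ} ⊗ I_{aᵢ}` (Kronecker products,
viewed as `N×N` matrices with `N = n₁⋯n_d`), is strictly smaller than `4d`. -/
theorem opNorm_laplacian_lt (d : ℕ) (hd : 1 ≤ d) (n : Fin d → ℕ) (hn : ∀ i, 1 ≤ n i)
    (N : ℕ) (hN : N = ∏ j, n j)
    (a b : Fin d → ℕ)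
    (ha : ∀ i, a i = ∏ j ∈ Finset.univ.filter (fun j => j < i), n j)
    (hb : ∀ i, b i = ∏ j ∈ Finset.univ.filter (fun j => i < j), n j)
    (hprod : ∀ i, b i * n i * a i = N)
    (D : Fin d → Matrix (Fin N) (Fin N) ℝ)
    (hD : ∀ i, D i = Matrix.reindex
      (((finProdFinEquiv.prodCongr (Equiv.refl (Fin (a i)))).trans finProdFinEquiv).trans
        (finCongr (hprod i)))
      (((finProdFinEquiv.prodCongr (Equiv.refl (Fin (a i)))).trans finProdFinEquiv).trans
        (finCongr (hprod i)))
      (((1 : Matrix (Fin (b i)) (Fin (b i)) ℝ) ⊗ₖ Dmat (n i)) ⊗ₖ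
        (1 : Matrix (Fin (a i)) (Fin (a i)) ℝ))) :
    ‖Matrix.toEuclideanCLM (𝕜 := ℝ) (∑ i, (D i)ᵀ * D i)‖ < 4 * d := by
  classical
  set A : Matrix (Fin N) (Fin N) ℝ := ∑ i, (D i)ᵀ * D i with hA
  set T : EuclideanSpace ℝ (Fin N) →L[ℝ] EuclideanSpace ℝ (Fin N) :=
    Matrix.toEuclideanCLM (𝕜 := ℝ) A with hT
  have hdR : (1:ℝ) ≤ d := by exact_mod_cast hd
  -- per-i inequalities
  have hDi : ∀ (i : Fin d) (x : Fin N → ℝ),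
      ((D i *ᵥ x) ⬝ᵥ (D i *ᵥ x) ≤ 4 * (x ⬝ᵥ x)) ∧
      (x ≠ 0 → (D i *ᵥ x) ⬝ᵥ (D i *ᵥ x) < 4 * (x ⬝ᵥ x)) := by
    intro i x
    set e := (((finProdFinEquiv.prodCongr (Equiv.refl (Fin (a i)))).trans
      finProdFinEquiv).trans (finCongr (hprod i))) with he
    set M := ((1 : Matrix (Fin (b i)) (Fin (b i)) ℝ) ⊗ₖ Dmat (n i)) ⊗ₖ
      (1 : Matrix (Fin (a i)) (Fin (a i)) ℝ) with hM
    have hre : D i *ᵥ x = (M *ᵥ (x ∘ e)) ∘ e.symm := by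
      rw [hD i, Matrix.reindex_apply, Matrix.submatrix_mulVec_equiv]
      rw [Equiv.symm_symm]
    have hd1 : (D i *ᵥ x) ⬝ᵥ (D i *ᵥ x) = (M *ᵥ (x ∘ e)) ⬝ᵥ (M *ᵥ (x ∘ e)) := by
      rw [hre]; exact dot_comp_equiv e.symm _ _
    have hd2 : x ⬝ᵥ x = (x ∘ e) ⬝ᵥ (x ∘ e) := (dot_comp_equiv e x x).symm
    have hk := kron_dot (b i) (n i) (a i) (x ∘ e) M hM
    refine ⟨by rw [hd1, hd2]; exact hk.1, fun hx => ?_⟩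
    rw [hd1, hd2]
    refine hk.2 ?_
    obtain ⟨j, hj⟩ := Function.ne_iff.mp hx
    exact Function.ne_iff.mpr ⟨e.symm j, by simpa using hj⟩
  -- the bilinear form
  have hTapp : ∀ (x : EuclideanSpace ℝ (Fin N)) (j : Fin N),
      (T x) j = (A *ᵥ (fun t => x t)) j := fun x j => rfl
  have hB : ∀ x z : EuclideanSpace ℝ (Fin N),
      ⟪T x, z⟫ = ∑ i, (D i *ᵥ (fun t => x t)) ⬝ᵥ (D i *ᵥ (fun t => z t)) := by
    intro x z
    have h1 : ⟪T x, z⟫ = (A *ᵥ (fun t => x t)) ⬝ᵥ (fun t => z t) := by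
      rw [PiLp.inner_apply]
      simp only [RCLike.inner_apply, conj_trivial]
      exact Finset.sum_congr rfl fun j _ => by rw [hTapp x j]; exact mul_comm _ _
    rw [h1, hA, sum_mulVec', sum_dot']
    refine Finset.sum_congr rfl fun i _ => ?_
    rw [← Matrix.mulVec_mulVec, Matrix.mulVec_transpose, ← dotProduct_mulVec]
  have hq_nonneg : ∀ x : EuclideanSpace ℝ (Fin N), 0 ≤ ⟪T x, x⟫ := by
    intro x
    rw [hB]
    exact Finset.sum_nonneg fun i _ =>
      Finset.sum_nonneg fun j _ => mul_self_nonneg _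
  -- strict quadratic bound
  have hqlt : ∀ x : EuclideanSpace ℝ (Fin N), x ≠ 0 → ⟪T x, x⟫ < 4 * d * ‖x‖ ^ 2 := by
    intro x hx
    have hxv : (fun t => x t) ≠ (0 : Fin N → ℝ) := by
      intro h
      apply hx
      ext j
      simpa using congrFun h j
    have hsum : ∑ i : Fin d, (D i *ᵥ (fun t => x t)) ⬝ᵥ (D i *ᵥ (fun t => x t))
        < ∑ _i : Fin d, 4 * ((fun t => x t) ⬝ᵥ (fun t => x t)) := by
      refine Finset.sum_lt_sum_of_nonempty ?_ fun i _ => (hDi i _).2 hxv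
      exact Finset.univ_nonempty_iff.mpr ⟨⟨0, hd⟩⟩
    have hdd : (fun t => x t) ⬝ᵥ (fun t => x t) = ‖x‖ ^ 2 := by
      rw [← real_inner_self_eq_norm_sq x, PiLp.inner_apply]
      simp only [RCLike.inner_apply, conj_trivial]
      rfl
    rw [hB]
    calc ∑ i : Fin d, (D i *ᵥ (fun t => x t)) ⬝ᵥ (D i *ᵥ (fun t => x t))
        < ∑ _i : Fin d, 4 * ((fun t => x t) ⬝ᵥ (fun t => x t)) := hsum
      _ = 4 * d * ‖x‖ ^ 2 := by
          rw [Finset.sum_const, Finset.card_univ, Fintype.card_fin, nsmul_eq_mul, hdd]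
          ring
  -- the maximizer on the sphere
  have hNpos : 0 < N := by
    rw [hN]; exact Finset.prod_pos fun j _ => hn j
  have hsne : (Metric.sphere (0 : EuclideanSpace ℝ (Fin N)) 1).Nonempty := by
    refine ⟨EuclideanSpace.single ⟨0, hNpos⟩ (1:ℝ), ?_⟩
    rw [mem_sphere_zero_iff_norm, EuclideanSpace.norm_single, norm_one]
  have hq_cont : Continuous fun x : EuclideanSpace ℝ (Fin N) => ⟪T x, x⟫ :=
    Continuous.inner T.continuous continuous_id
  obtain ⟨x₀, hx₀s, hmax⟩ :=
    (isCompact_sphere (0 : EuclideanSpace ℝ (Fin N)) 1).exists_isMaxOn hsne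
      hq_cont.continuousOn
  set μ : ℝ := ⟪T x₀, x₀⟫ with hμ
  have hx₀norm : ‖x₀‖ = 1 := mem_sphere_zero_iff_norm.mp hx₀s
  have hx₀ne : x₀ ≠ 0 := by
    intro h; rw [h, norm_zero] at hx₀norm; exact one_ne_zero hx₀norm.symm
  have hμ_nonneg : 0 ≤ μ := hq_nonneg x₀
  have hμlt : μ < 4 * d := by
    have := hqlt x₀ hx₀ne
    rwa [hx₀norm, one_pow, mul_one] at this
  -- q x ≤ μ ‖x‖²
  have hqle : ∀ x : EuclideanSpace ℝ (Fin N), ⟪T x, x⟫ ≤ μ * ‖x‖ ^ 2 := by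
    intro x
    rcases eq_or_ne x 0 with rfl | hx
    · simp [inner_zero_right]
    · have hc : (0:ℝ) < ‖x‖ := norm_pos_iff.mpr hx
      set y : EuclideanSpace ℝ (Fin N) := ‖x‖⁻¹ • x with hy
      have hyn : ‖y‖ = 1 := by
        rw [hy, norm_smul, norm_inv, norm_norm, inv_mul_cancel₀ hc.ne']
      have hys : y ∈ Metric.sphere (0 : EuclideanSpace ℝ (Fin N)) 1 :=
        mem_sphere_zero_iff_norm.mpr hyn
      have hle : ⟪T y, y⟫ ≤ μ := hmax hys
      have hxy : x = ‖x‖ • y := by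
        rw [hy, smul_smul, mul_inv_cancel₀ hc.ne', one_smul]
      calc ⟪T x, x⟫ = ‖x‖ ^ 2 * ⟪T y, y⟫ := by
            rw [hxy, T.map_smul, real_inner_smul_left, real_inner_smul_right,
              norm_smul, hyn, norm_norm]; ring
        _ ≤ ‖x‖ ^ 2 * μ := by
            exact mul_le_mul_of_nonneg_left hle (by positivity)
        _ = μ * ‖x‖ ^ 2 := by ring
  -- Cauchy-Schwarz for the form
  have hCS : ∀ x z : EuclideanSpace ℝ (Fin N),
      ⟪T x, z⟫ ≤ Real.sqrt ⟪T x, x⟫ * Real.sqrt ⟪T z, z⟫ := by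
    intro x z
    rw [hB x z, hB x x, hB z z]
    calc ∑ i, (D i *ᵥ (fun t => x t)) ⬝ᵥ (D i *ᵥ (fun t => z t))
        ≤ ∑ i, Real.sqrt ((D i *ᵥ (fun t => x t)) ⬝ᵥ (D i *ᵥ (fun t => x t)))
            * Real.sqrt ((D i *ᵥ (fun t => z t)) ⬝ᵥ (D i *ᵥ (fun t => z t))) :=
          Finset.sum_le_sum fun i _ => dotCS _ _
      _ ≤ _ := Real.sum_sqrt_mul_sqrt_le Finset.univ
          (fun i => Finset.sum_nonneg fun j _ => mul_self_nonneg _)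
          (fun i => Finset.sum_nonneg fun j _ => mul_self_nonneg _)
  -- ‖T x‖² ≤ ‖T‖ ⟪T x, x⟫
  have hTle : ∀ x : EuclideanSpace ℝ (Fin N), ‖T x‖ ^ 2 ≤ ‖T‖ * ⟪T x, x⟫ := by
    intro x
    set u := T x with hu
    have h1 : ‖u‖ ^ 2 = ⟪T x, u⟫ := (real_inner_self_eq_norm_sq u).symm
    have h2 : ⟪T x, u⟫ ≤ Real.sqrt ⟪T x, x⟫ * Real.sqrt ⟪T u, u⟫ := hCS x u
    have h3 : ⟪T u, u⟫ ≤ ‖T‖ * ‖u‖ ^ 2 := by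
      calc ⟪T u, u⟫ ≤ ‖T u‖ * ‖u‖ := real_inner_le_norm _ _
        _ ≤ (‖T‖ * ‖u‖) * ‖u‖ := by
            exact mul_le_mul_of_nonneg_right (T.le_opNorm u) (norm_nonneg _)
        _ = ‖T‖ * ‖u‖ ^ 2 := by ring
    have h4 : Real.sqrt ⟪T u, u⟫ ≤ Real.sqrt ‖T‖ * ‖u‖ := by
      calc Real.sqrt ⟪T u, u⟫ ≤ Real.sqrt (‖T‖ * ‖u‖ ^ 2) := Real.sqrt_le_sqrt h3
        _ = Real.sqrt ‖T‖ * ‖u‖ := by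
            rw [Real.sqrt_mul (norm_nonneg T), Real.sqrt_sq (norm_nonneg u)]
    have h5 : ‖u‖ ^ 2 ≤ Real.sqrt ⟪T x, x⟫ * (Real.sqrt ‖T‖ * ‖u‖) := by
      refine h1.trans_le (h2.trans ?_)
      exact mul_le_mul_of_nonneg_left h4 (Real.sqrt_nonneg _)
    have hsx : Real.sqrt ⟪T x, x⟫ ^ 2 = ⟪T x, x⟫ := Real.sq_sqrt (hq_nonneg x)
    have hsT : Real.sqrt ‖T‖ ^ 2 = ‖T‖ := Real.sq_sqrt (norm_nonneg T)
    nlinarith [norm_nonneg u, Real.sqrt_nonneg (⟪T x, x⟫ : ℝ), Real.sqrt_nonneg ‖T‖,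
      sq_nonneg (‖u‖ - Real.sqrt ⟪T x, x⟫ * Real.sqrt ‖T‖)]
  -- conclude
  have hbound : ∀ x : EuclideanSpace ℝ (Fin N),
      ‖T x‖ ≤ Real.sqrt (‖T‖ * μ) * ‖x‖ := by
    intro x
    have h1 : ‖T x‖ ^ 2 ≤ (‖T‖ * μ) * ‖x‖ ^ 2 := by
      calc ‖T x‖ ^ 2 ≤ ‖T‖ * ⟪T x, x⟫ := hTle x
        _ ≤ ‖T‖ * (μ * ‖x‖ ^ 2) :=
            mul_le_mul_of_nonneg_left (hqle x) (norm_nonneg T)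
        _ = (‖T‖ * μ) * ‖x‖ ^ 2 := by ring
    have h2 : ‖T x‖ = Real.sqrt (‖T x‖ ^ 2) := (Real.sqrt_sq (norm_nonneg _)).symm
    rw [h2]
    calc Real.sqrt (‖T x‖ ^ 2) ≤ Real.sqrt ((‖T‖ * μ) * ‖x‖ ^ 2) := Real.sqrt_le_sqrt h1
      _ = Real.sqrt (‖T‖ * μ) * ‖x‖ := by
          rw [Real.sqrt_mul (mul_nonneg (norm_nonneg T) hμ_nonneg),
            Real.sqrt_sq (norm_nonneg x)]
  have hTnorm : ‖T‖ ≤ Real.sqrt (‖T‖ * μ) :=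
    T.opNorm_le_bound (Real.sqrt_nonneg _) hbound
  have hsq : ‖T‖ ^ 2 ≤ ‖T‖ * μ := by
    have := Real.sq_sqrt (mul_nonneg (norm_nonneg T) hμ_nonneg)
    nlinarith [Real.sqrt_nonneg (‖T‖ * μ), norm_nonneg T]
  rcases (norm_nonneg T).eq_or_lt with h0 | h0
  · rw [← h0]
    nlinarith
  · have : ‖T‖ ≤ μ := by nlinarith
    exact this.trans_lt hμlt
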